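/- Let K, L be closed subspaces of a real Hilbert space with K + L = V and K ∩ L = {0}, and let P, Q be the orthogonal projections onto K and L. Then the operator P - Q is injective. -/

import Mathlib

open RealInnerProductSpace


theorem stmt_8 {V : Type*} [NormedAddCommGroup V] [InnerProductSpace ℝ V] [CompleteSpace V]
    (K L : Submodule ℝ V) (hKc : IsClosed (K : Set V)) (hLc : IsClosed (L : Set V))
    (hsup : K ⊔ L = ⊤) (hinf : K ⊓ L = ⊥)
    (P Q : V →L[ℝ] V) (hPsa : IsSelfAdjoint P) (hQsa : IsSelfAdjoint Q)
    (hPK : ∀ x, P x ∈ K) (hPfix : ∀ x ∈ K, P x = x)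
    (hQL : ∀ x, Q x ∈ L) (hQfix : ∀ x ∈ L, Q x = x) :
    Function.Injective (P - Q) := by
  have key : ∀ x, (P - Q) x = 0 → x = 0 := by
    intro x hx
    have hPQ : P x = Q x := by
      have h := hx
      simp only [ContinuousLinearMap.sub_apply, sub_eq_zero] at h
      exact h
    have hmem : P x ∈ K ⊓ L := ⟨hPK x, hPQ ▸ hQL x⟩
    rw [hinf] at hmem
    have hP0 : P x = 0 := hmem
    have hQ0 : Q x = 0 := hPQ ▸ hP0
    have hxK : ∀ k ∈ K, (inner ℝ (x) (k) : ℝ) = 0 := by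
      intro k hk
      calc (inner ℝ (x) (k) : ℝ) = (inner ℝ (x) (P k) : ℝ) := by rw [hPfix k hk]
        _ = (inner ℝ (P x) (k) : ℝ) := (hPsa.isSymmetric x k).symm
        _ = 0 := by rw [hP0]; simp
    have hxL : ∀ l ∈ L, (inner ℝ (x) (l) : ℝ) = 0 := by
      intro l hl
      calc (inner ℝ (x) (l) : ℝ) = (inner ℝ (x) (Q l) : ℝ) := by rw [hQfix l hl]
        _ = (inner ℝ (Q x) (l) : ℝ) := (hQsa.isSymmetric x l).symm
        _ = 0 := by rw [hQ0]; simp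
    have hself : (inner ℝ (x) (x) : ℝ) = 0 := by
      have hxtop : x ∈ K ⊔ L := hsup ▸ Submodule.mem_top
      obtain ⟨k, hk, l, hl, hkl⟩ := Submodule.mem_sup.mp hxtop
      subst hkl
      rw [inner_add_right, hxK k hk, hxL l hl, add_zero]
    exact inner_self_eq_zero.mp hself
  intro a b hab
  have h0 : (P - Q) (a - b) = 0 := by rw [map_sub, hab, sub_self]
  have := key _ h0
  exact sub_eq_zero.mp this
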